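/- Let ζ ∈ [0,1), k₀ = √((1−ζ)/(1+ζ)), and Φ(ζ,k) = i(k² + k₀²)/(k(1+k₀²)). For every real u, Re Φ(ζ, k₀ + u e^{iπ/4}) = −u²(2k₀ + √2 u) / (2(k₀² + 1)(k₀² + √2 k₀ u + u²)). -/

import Mathlib

open Complex

/-- The stationary point `k₀(ζ) = √((1−ζ)/(1+ζ))`. -/
noncomputable def kzero (ζ : ℝ) : ℝ := Real.sqrt ((1 - ζ) / (1 + ζ))

/-- The sine-Gordon phase function in the form `Φ(ζ,k) = i(k² + k₀²)/(k(1+k₀²))`. -/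
noncomputable def Phi (ζ : ℝ) (k : ℂ) : ℂ :=
  Complex.I * (k ^ 2 + ((kzero ζ : ℝ) : ℂ) ^ 2) / (k * (1 + ((kzero ζ : ℝ) : ℂ) ^ 2))

theorem reform (a x y : ℝ) (hxy : x^2 + y^2 ≠ 0) :
    (Complex.I * (((x:ℂ) + (y:ℂ)*Complex.I)^2 + (a:ℂ)^2) /
      (((x:ℂ) + (y:ℂ)*Complex.I) * (1 + (a:ℂ)^2))).re
      = y*(a^2 - x^2 - y^2)/((1+a^2)*(x^2+y^2)) := by
  have h1 : (1 + a^2) ≠ 0 := by positivity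
  have hd2 : (1+a^2)*(x^2+y^2) ≠ 0 := mul_ne_zero h1 hxy
  rw [Complex.div_re]
  have hn : Complex.normSq (((x:ℂ) + (y:ℂ)*Complex.I) * (1 + (a:ℂ)^2)) = (x^2+y^2)*(1+a^2)^2 := by
    simp only [Complex.normSq_apply, Complex.mul_re, Complex.mul_im, Complex.add_re,
      Complex.add_im, Complex.I_re, Complex.I_im, Complex.one_re, Complex.one_im,
      ← Complex.ofReal_pow, Complex.ofReal_re, Complex.ofReal_im]
    ring
  rw [hn]
  have hd3 : (x^2+y^2)*(1+a^2)^2 ≠ 0 := mul_ne_zero hxy (pow_ne_zero _ h1)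
  rw [← add_div, div_eq_div_iff hd3 hd2]
  simp only [Complex.mul_re, Complex.mul_im, Complex.add_re, Complex.add_im,
    Complex.I_re, Complex.I_im, Complex.one_re, Complex.one_im, pow_two, Complex.mul_re,
    ← Complex.ofReal_pow, Complex.ofReal_re, Complex.ofReal_im]
  ring

/-- `Re Φ` along the steepest-descent ray from `k₀` at angle `π/4`. -/
theorem stmt3 (ζ : ℝ) (hζ : ζ ∈ Set.Ico (0 : ℝ) 1) (u : ℝ) :
    (Phi ζ (((kzero ζ : ℝ) : ℂ) + (u : ℂ) * ((1 + Complex.I) / (Real.sqrt 2 : ℝ)))).re =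
      -(u ^ 2 * (2 * kzero ζ + Real.sqrt 2 * u)) /
        (2 * (kzero ζ ^ 2 + 1) * (kzero ζ ^ 2 + Real.sqrt 2 * kzero ζ * u + u ^ 2)) := by
  obtain ⟨hζ0, hζ1⟩ := hζ
  set s : ℝ := Real.sqrt 2 with hsdef
  have hs : s ^ 2 = 2 := Real.sq_sqrt (by norm_num)
  have hs0 : (0:ℝ) < s := Real.sqrt_pos.mpr (by norm_num)
  set a : ℝ := kzero ζ with hadef
  have ha : 0 < a := Real.sqrt_pos.mpr (div_pos (by linarith) (by linarith))
  set x : ℝ := a + u * s / 2 with hxdef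
  set y : ℝ := u * s / 2 with hydef
  have hD : (0:ℝ) < a ^ 2 + s * a * u + u ^ 2 := by
    have hrw : a ^ 2 + s * a * u + u ^ 2 = (a + s*u/2)^2 + u^2/2 := by
      linear_combination (-(u^2)/4) * hs
    rw [hrw]
    rcases eq_or_ne u 0 with h | h
    · simp [h]; positivity
    · exact add_pos_of_nonneg_of_pos (sq_nonneg _) (by positivity)
  have hxy : x ^ 2 + y ^ 2 = a ^ 2 + s * a * u + u ^ 2 := by
    rw [hxdef, hydef]; linear_combination (u^2/2) * hs
  have hxy0 : x ^ 2 + y ^ 2 ≠ 0 := by rw [hxy]; exact ne_of_gt hD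
  have hsC : ((s:ℝ):ℂ) ^ 2 = 2 := by
    rw [← Complex.ofReal_pow, hs]; norm_num
  have hsCne : ((s:ℝ):ℂ) ≠ 0 := by
    simpa using ne_of_gt hs0
  have hk : ((a:ℝ):ℂ) + (u:ℂ) * ((1 + Complex.I) / ((s:ℝ):ℂ)) = ((x:ℝ):ℂ) + ((y:ℝ):ℂ) * Complex.I := by
    rw [hxdef, hydef]
    push_cast
    field_simp
    linear_combination (-(u:ℂ) - (u:ℂ)*Complex.I) * hsC
  rw [Phi, ← hadef, hk, reform a x y hxy0, hxy]
  have hden1 : ((1+a^2)*(a ^ 2 + s * a * u + u ^ 2)) ≠ 0 :=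
    mul_ne_zero (by positivity) (ne_of_gt hD)
  have hden2 : (2 * (a ^ 2 + 1) * (a ^ 2 + s * a * u + u ^ 2)) ≠ 0 :=
    mul_ne_zero (by positivity) (ne_of_gt hD)
  rw [div_eq_div_iff hden1 hden2, hxdef, hydef]
  linear_combination (-(2:ℝ)*(1+a^2)*(a^2+s*a*u+u^2)*(a*u^2/2+s*u^3/4)) * hs
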